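/- (Gaussian empirical Bayes / Miyasawa) Let $X \sim p$ on $\mathbb{R}^d$ and $Y = X + \mathcal{N}(0, \sigma^2 I_d)$, with smoothed density $q(y) = \int \mathcal{N}(y; x, \sigma^2 I_d) p(x) dx$. Then the posterior mean satisfies $\mathbb{E}[X \mid Y = y] = y + \sigma^2 \nabla \log q(y)$. -/

import Mathlib

open MeasureTheory InnerProductSpace

/-- Isotropic Gaussian density `N(z; 0, σ² I_d)` on `ℝ^d`. -/
noncomputable def gaussPdf (d : ℕ) (σ : ℝ) (z : EuclideanSpace ℝ (Fin d)) : ℝ :=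
  (2 * Real.pi * σ ^ 2) ^ (-(d : ℝ) / 2) * Real.exp (-‖z‖ ^ 2 / (2 * σ ^ 2))

lemma key_bound {σ t : ℝ} (hσ : 0 < σ) :
    t * Real.exp (-t ^ 2 / (2 * σ ^ 2)) ≤ σ := by
  have h := Real.add_one_le_exp (t ^ 2 / (2 * σ ^ 2))
  have hexp : Real.exp (-t ^ 2 / (2 * σ ^ 2)) = (Real.exp (t ^ 2 / (2 * σ ^ 2)))⁻¹ := by
    rw [← Real.exp_neg]; ring_nf
  rw [hexp, mul_inv_le_iff₀ (Real.exp_pos _)]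
  have h2 : σ * (t ^ 2 / (2 * σ ^ 2) + 1) ≤ σ * Real.exp (t ^ 2 / (2 * σ ^ 2)) := by
    exact mul_le_mul_of_nonneg_left h hσ.le
  refine le_trans ?_ h2
  have hσ2 : (0:ℝ) < σ ^ 2 := by positivity
  rw [mul_add, mul_one]
  have heq : σ * (t ^ 2 / (2 * σ ^ 2)) = t ^ 2 / (2 * σ) := by
    field_simp
  rw [heq, div_add' _ _ _ (by positivity : (2:ℝ) * σ ≠ 0),
    le_div_iff₀ (by positivity : (0:ℝ) < 2 * σ)]
  nlinarith [sq_nonneg (t - σ)]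

lemma gaussPdf_pos {d : ℕ} {σ : ℝ} (hσ : 0 < σ) (z : EuclideanSpace ℝ (Fin d)) :
    0 < gaussPdf d σ z := by
  have : (0:ℝ) < 2 * Real.pi * σ ^ 2 := by positivity
  unfold gaussPdf
  positivity

lemma gaussPdf_le {d : ℕ} {σ : ℝ} (hσ : 0 < σ) (z : EuclideanSpace ℝ (Fin d)) :
    gaussPdf d σ z ≤ (2 * Real.pi * σ ^ 2) ^ (-(d : ℝ) / 2) := by
  unfold gaussPdf
  have h0 : (0:ℝ) ≤ (2 * Real.pi * σ ^ 2) ^ (-(d : ℝ) / 2) := by positivity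
  have h1 : Real.exp (-‖z‖ ^ 2 / (2 * σ ^ 2)) ≤ 1 := by
    rw [Real.exp_le_one_iff]
    apply div_nonpos_of_nonpos_of_nonneg
    · simpa using sq_nonneg ‖z‖
    · positivity
  nlinarith

lemma gaussPdf_mul_norm_le {d : ℕ} {σ : ℝ} (hσ : 0 < σ) (z : EuclideanSpace ℝ (Fin d)) :
    gaussPdf d σ z * ‖z‖ ≤ (2 * Real.pi * σ ^ 2) ^ (-(d : ℝ) / 2) * σ := by
  unfold gaussPdf
  have h0 : (0:ℝ) ≤ (2 * Real.pi * σ ^ 2) ^ (-(d : ℝ) / 2) := by positivity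
  have h1 : ‖z‖ * Real.exp (-‖z‖ ^ 2 / (2 * σ ^ 2)) ≤ σ := key_bound hσ
  calc (2 * Real.pi * σ ^ 2) ^ (-(d : ℝ) / 2) * Real.exp (-‖z‖ ^ 2 / (2 * σ ^ 2)) * ‖z‖
      = (2 * Real.pi * σ ^ 2) ^ (-(d : ℝ) / 2) * (‖z‖ * Real.exp (-‖z‖ ^ 2 / (2 * σ ^ 2))) := by
        ring
    _ ≤ (2 * Real.pi * σ ^ 2) ^ (-(d : ℝ) / 2) * σ := by
        exact mul_le_mul_of_nonneg_left h1 h0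

lemma gaussPdf_continuous {d : ℕ} {σ : ℝ} : Continuous (gaussPdf d σ) := by
  unfold gaussPdf
  fun_prop

lemma hasFDerivAt_gaussPdf {d : ℕ} {σ : ℝ} (z : EuclideanSpace ℝ (Fin d)) :
    HasFDerivAt (gaussPdf d σ)
      ((toDual ℝ (EuclideanSpace ℝ (Fin d))) ((-(σ ^ 2)⁻¹ * gaussPdf d σ z) • z)) z := by
  have hs : HasFDerivAt (fun z : EuclideanSpace ℝ (Fin d) => ‖z‖ ^ 2)
      (2 • (innerSL ℝ z)) z := (hasStrictFDerivAt_norm_sq z).hasFDerivAt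
  have h2 : HasFDerivAt (fun z : EuclideanSpace ℝ (Fin d) => -‖z‖ ^ 2 / (2 * σ ^ 2))
      ((-(2 * σ ^ 2)⁻¹) • (2 • (innerSL ℝ z))) z := by
    have : (fun z : EuclideanSpace ℝ (Fin d) => -‖z‖ ^ 2 / (2 * σ ^ 2))
        = fun z => (-(2 * σ ^ 2)⁻¹) * ‖z‖ ^ 2 := by funext w; ring
    rw [this]
    exact hs.const_mul _
  have h3 := ((Real.hasDerivAt_exp (-‖z‖ ^ 2 / (2 * σ ^ 2))).comp_hasFDerivAt z h2).const_mul
    ((2 * Real.pi * σ ^ 2) ^ (-(d : ℝ) / 2))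
  refine HasFDerivAt.congr_fderiv (f := gaussPdf d σ) h3 ?_
  ext w
  simp only [toDual_apply_apply, innerSL_apply_apply, ContinuousLinearMap.coe_smul', Pi.smul_apply,
    ContinuousLinearMap.smul_apply, smul_eq_mul, real_inner_smul_left, gaussPdf]
  ring

set_option maxHeartbeats 1000000 in
set_option synthInstance.maxHeartbeats 400000 in
/-- Gaussian empirical Bayes / Miyasawa: with
`q(y) = ∫ N(y; x, σ² I_d) p(x) dx` the Gaussian smoothing of the density `p`, the
posterior mean `E[X | Y = y] = (∫ x N(y;x,σ²I) p(x) dx) / q(y)` satisfies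
`E[X | Y = y] = y + σ² ∇ log q(y)`. -/
theorem miyasawa_empirical_bayes
    (d : ℕ) (σ : ℝ) (hσ : 0 < σ)
    (p : EuclideanSpace ℝ (Fin d) → ℝ) (hp_meas : Measurable p)
    (hp_nonneg : ∀ x, 0 ≤ p x) (hp_int : ∫ x, p x = 1)
    (hp_moment : Integrable (fun x => ‖x‖ * p x))
    (q : EuclideanSpace ℝ (Fin d) → ℝ)
    (hq : ∀ y, q y = ∫ x, gaussPdf d σ (y - x) * p x)
    (y : EuclideanSpace ℝ (Fin d)) :
    (q y)⁻¹ • (∫ x, (gaussPdf d σ (y - x) * p x) • x) =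
      y + σ ^ 2 • gradient (fun z => Real.log (q z)) y := by
  set c : ℝ := (2 * Real.pi * σ ^ 2) ^ (-(d : ℝ) / 2) with hc_def
  have hc : 0 < c := by positivity
  have hσ2 : (0:ℝ) < σ ^ 2 := by positivity
  -- p is integrable
  have hp_Int : Integrable p := by
    by_contra h
    rw [integral_undef h] at hp_int
    exact one_ne_zero hp_int.symm
  -- measurability of the basic integrand
  have hNx_cont : ∀ y' : (EuclideanSpace ℝ (Fin d)), Continuous (fun x : (EuclideanSpace ℝ (Fin d)) => gaussPdf d σ (y' - x)) := fun y' =>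
    gaussPdf_continuous.comp (continuous_const.sub continuous_id)
  have hmeas1 : ∀ y' : (EuclideanSpace ℝ (Fin d)), AEStronglyMeasurable (fun x : (EuclideanSpace ℝ (Fin d)) => gaussPdf d σ (y' - x) * p x) :=
    fun y' => ((hNx_cont y').measurable.mul hp_meas).aestronglyMeasurable
  -- integrability of N * p
  have hint1 : ∀ y' : (EuclideanSpace ℝ (Fin d)), Integrable (fun x : (EuclideanSpace ℝ (Fin d)) => gaussPdf d σ (y' - x) * p x) := by
    intro y'
    refine Integrable.mono' (hp_Int.const_mul c) (hmeas1 y') ?_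
    filter_upwards with x
    rw [Real.norm_eq_abs, abs_of_nonneg (mul_nonneg (gaussPdf_pos hσ _).le (hp_nonneg x))]
    exact mul_le_mul_of_nonneg_right (gaussPdf_le hσ _) (hp_nonneg x)
  -- integrability of (N * p) • x
  have hint2 : Integrable (fun x : (EuclideanSpace ℝ (Fin d)) => (gaussPdf d σ (y - x) * p x) • x) := by
    refine Integrable.mono' (hp_moment.const_mul c) ((hmeas1 y).smul aestronglyMeasurable_id) ?_
    filter_upwards with x
    rw [norm_smul, Real.norm_eq_abs,
      abs_of_nonneg (mul_nonneg (gaussPdf_pos hσ _).le (hp_nonneg x))]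
    calc gaussPdf d σ (y - x) * p x * ‖x‖
        ≤ c * p x * ‖x‖ := by
          exact mul_le_mul_of_nonneg_right
            (mul_le_mul_of_nonneg_right (gaussPdf_le hσ _) (hp_nonneg x)) (norm_nonneg x)
      _ = c * (‖x‖ * p x) := by ring
  -- positivity of q y
  have hq_pos : 0 < q y := by
    rcases lt_or_eq_of_le (integral_nonneg
      (f := fun x => gaussPdf d σ (y - x) * p x)
      (fun x => mul_nonneg (gaussPdf_pos hσ _).le (hp_nonneg x))) with h | h
    · rw [hq]; exact h
    · exfalso
      have h0 : ∫ x, gaussPdf d σ (y - x) * p x = 0 := h.symm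
      have hz := (integral_eq_zero_iff_of_nonneg
        (fun x => mul_nonneg (gaussPdf_pos hσ _).le (hp_nonneg x)) (hint1 y)).mp h0
      have hp0 : p =ᵐ[volume] 0 := by
        filter_upwards [hz] with x hx
        have := mul_eq_zero.mp hx
        rcases this with h' | h'
        · exact absurd h' (gaussPdf_pos hσ _).ne'
        · exact h'
      rw [integral_congr_ae hp0] at hp_int
      simp at hp_int
  have hq_ne : q y ≠ 0 := hq_pos.ne'
  -- the candidate gradient vector of q
  set G : (EuclideanSpace ℝ (Fin d)) := ∫ x, p x • ((-(σ ^ 2)⁻¹ * gaussPdf d σ (y - x)) • (y - x)) with hG_def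
  -- derivative of q via differentiation under the integral sign
  have hQ : HasFDerivAt q ((toDual ℝ (EuclideanSpace ℝ (Fin d))) G) y := by
    have key : HasFDerivAt (fun y' : (EuclideanSpace ℝ (Fin d)) => ∫ x, gaussPdf d σ (y' - x) * p x)
        (∫ x, p x • ((toDual ℝ (EuclideanSpace ℝ (Fin d))) ((-(σ ^ 2)⁻¹ * gaussPdf d σ (y - x)) • (y - x)))) y := by
      apply hasFDerivAt_integral_of_dominated_of_fderiv_le
        (F' := fun y' x => p x • ((toDual ℝ (EuclideanSpace ℝ (Fin d))) ((-(σ ^ 2)⁻¹ * gaussPdf d σ (y' - x)) • (y' - x))))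
        (bound := fun x => ((σ ^ 2)⁻¹ * (c * σ)) * p x) (Metric.ball_mem_nhds y one_pos)
      · filter_upwards with y' using hmeas1 y'
      · exact hint1 y
      · apply AEStronglyMeasurable.smul hp_meas.aestronglyMeasurable
        apply Continuous.aestronglyMeasurable
        exact (toDual ℝ (EuclideanSpace ℝ (Fin d))).continuous.comp
          ((continuous_const.mul (hNx_cont y)).smul (continuous_const.sub continuous_id))
      · filter_upwards with x
        intro y' _
        rw [← LinearIsometryEquiv.map_smul, LinearIsometryEquiv.norm_map, norm_smul, norm_smul]
        rw [Real.norm_eq_abs, abs_of_nonneg (hp_nonneg x), Real.norm_eq_abs]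
        rw [abs_mul, abs_neg, abs_inv, abs_of_nonneg hσ2.le,
          abs_of_nonneg (gaussPdf_pos hσ _).le]
        calc p x * ((σ ^ 2)⁻¹ * gaussPdf d σ (y' - x) * ‖y' - x‖)
            = p x * ((σ ^ 2)⁻¹ * (gaussPdf d σ (y' - x) * ‖y' - x‖)) := by ring
          _ ≤ p x * ((σ ^ 2)⁻¹ * (c * σ)) := by
              refine mul_le_mul_of_nonneg_left (mul_le_mul_of_nonneg_left ?_ (by positivity))
                (hp_nonneg x)
              exact gaussPdf_mul_norm_le hσ _
          _ = ((σ ^ 2)⁻¹ * (c * σ)) * p x := by ring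
      · exact hp_Int.const_mul _
      · filter_upwards with x
        intro y' _
        have h1 : HasFDerivAt (fun y' : (EuclideanSpace ℝ (Fin d)) => gaussPdf d σ (y' - x))
            ((toDual ℝ (EuclideanSpace ℝ (Fin d))) ((-(σ ^ 2)⁻¹ * gaussPdf d σ (y' - x)) • (y' - x))) y' := by
          have hsub : HasFDerivAt (fun w : (EuclideanSpace ℝ (Fin d)) => w - x) (ContinuousLinearMap.id ℝ (EuclideanSpace ℝ (Fin d))) y' :=
            (hasFDerivAt_id y').sub_const x
          have := (hasFDerivAt_gaussPdf (σ := σ) (y' - x)).comp y' hsub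
          simpa [Function.comp_def] using this
        exact h1.mul_const (p x)
    have heq : (fun y' : (EuclideanSpace ℝ (Fin d)) => ∫ x, gaussPdf d σ (y' - x) * p x) = q := by
      funext y'; rw [hq]
    rw [heq] at key
    have hcomm : (∫ x, p x • ((toDual ℝ (EuclideanSpace ℝ (Fin d))) ((-(σ ^ 2)⁻¹ * gaussPdf d σ (y - x)) • (y - x))))
        = (toDual ℝ (EuclideanSpace ℝ (Fin d))) G := by
      rw [hG_def]
      calc (∫ x, p x • ((toDual ℝ (EuclideanSpace ℝ (Fin d)))
              ((-(σ ^ 2)⁻¹ * gaussPdf d σ (y - x)) • (y - x))))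
          = ∫ x, (toDual ℝ (EuclideanSpace ℝ (Fin d))).toLinearIsometry
              (p x • ((-(σ ^ 2)⁻¹ * gaussPdf d σ (y - x)) • (y - x))) := by
            congr 1
            funext x
            simp [LinearIsometryEquiv.coe_toLinearIsometry, toDual_apply_eq_toDualMap_apply]
        _ = (toDual ℝ (EuclideanSpace ℝ (Fin d))).toLinearIsometry
              (∫ x, p x • ((-(σ ^ 2)⁻¹ * gaussPdf d σ (y - x)) • (y - x))) :=
            LinearIsometry.integral_comp_comm _ _
        _ = (toDual ℝ (EuclideanSpace ℝ (Fin d)))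
              (∫ x, p x • ((-(σ ^ 2)⁻¹ * gaussPdf d σ (y - x)) • (y - x))) := rfl
    rwa [hcomm] at key
  -- gradient of log q
  have hlog : HasGradientAt (fun z => Real.log (q z)) ((q y)⁻¹ • G) y := by
    rw [hasGradientAt_iff_hasFDerivAt, LinearIsometryEquiv.map_smul]
    exact (Real.hasDerivAt_log hq_ne).comp_hasFDerivAt y hQ
  rw [hlog.gradient]
  -- final algebra
  have hGsum : σ ^ 2 • G = (∫ x, (gaussPdf d σ (y - x) * p x) • x) - (q y) • y := by
    rw [hG_def, ← integral_smul]
    have hptw : (fun x : (EuclideanSpace ℝ (Fin d)) => σ ^ 2 • (p x • ((-(σ ^ 2)⁻¹ * gaussPdf d σ (y - x)) • (y - x))))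
        = fun x : (EuclideanSpace ℝ (Fin d)) => (gaussPdf d σ (y - x) * p x) • x - (gaussPdf d σ (y - x) * p x) • y := by
      funext x
      rw [smul_smul, smul_smul]
      have hcoef : σ ^ 2 * p x * (-(σ ^ 2)⁻¹ * gaussPdf d σ (y - x))
          = -(gaussPdf d σ (y - x) * p x) := by
        field_simp
      rw [hcoef, neg_smul, smul_sub]
      abel
    rw [hptw, integral_sub hint2 ((hint1 y).smul_const y), integral_smul_const, ← hq]
  rw [smul_comm (σ ^ 2) ((q y)⁻¹) G, hGsum, smul_sub, smul_smul, inv_mul_cancel₀ hq_ne, one_smul]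
  abel
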